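/- Let k be a field, 𝒞 a formation (Hopf-encoded), and A a commutative Hopf algebra over k. Let A_𝒞 denote the union of all finitely generated Hopf subalgebras of A that belong to 𝒞. Then: (1) A_𝒞 is a Hopf subalgebra of A; (2) A_𝒞 is pro-𝒞, i.e., every finitely generated Hopf subalgebra of A_𝒞 belongs to 𝒞; and (3) every Hopf subalgebra B of A that is pro-𝒞 is contained in A_𝒞. -/

import Mathlib

open TensorProduct

section Prelim

variable (k : Type) [Field k]

/-- Bundled commutative Hopf algebra over `k`. -/
structure HopfAlg where
  carrier : Type
  [instCommRing : CommRing carrier]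
  [instHopf : HopfAlgebra k carrier]

attribute [instance] HopfAlg.instCommRing HopfAlg.instHopf

variable {k}

/-- `B` is a Hopf subalgebra of `A`: the comultiplication maps `B` into the image of
`B ⊗ B` in `A ⊗ A` and the antipode maps `B` into `B`. -/
def IsHopfSubalgebra {A : Type} [CommRing A] [HopfAlgebra k A]
    (B : Subalgebra k A) : Prop :=
  (∀ b ∈ B, Coalgebra.comul (R := k) b ∈
      LinearMap.range (TensorProduct.map B.val.toLinearMap B.val.toLinearMap)) ∧
  (∀ b ∈ B, HopfAlgebra.antipode (R := k) b ∈ B)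

/-- A Hopf algebra homomorphism: a `k`-algebra homomorphism commuting with the
comultiplications. -/
def IsHopfHom {A B : Type} [CommRing A] [HopfAlgebra k A]
    [CommRing B] [HopfAlgebra k B] (f : A →ₐ[k] B) : Prop :=
  ∀ a : A, Coalgebra.comul (R := k) (f a) =
    TensorProduct.map f.toLinearMap f.toLinearMap (Coalgebra.comul (R := k) a)

/-- A Hopf ideal of `A`: the counit vanishes on `I`, the comultiplication maps `I` into
`I ⊗ A + A ⊗ I`, and the antipode maps `I` into `I`. -/
def IsHopfIdeal (k : Type) [Field k] {A : Type} [CommRing A] [HopfAlgebra k A]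
    (I : Ideal A) : Prop :=
  (∀ a ∈ I, Coalgebra.counit (R := k) a = 0) ∧
  (∀ a ∈ I, Coalgebra.comul (R := k) a ∈
      LinearMap.range (TensorProduct.map (Submodule.restrictScalars k I).subtype
        (LinearMap.id : A →ₗ[k] A)) ⊔
      LinearMap.range (TensorProduct.map (LinearMap.id : A →ₗ[k] A)
        (Submodule.restrictScalars k I).subtype)) ∧
  (∀ a ∈ I, HopfAlgebra.antipode (R := k) a ∈ I)

/-- A subalgebra `S` of `A` "belongs to the class `𝒞`" if some member of `𝒞` maps onto `S`
by an injective Hopf algebra homomorphism into `A`. -/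
def MemFormation (𝒞 : Set (HopfAlg k)) {A : Type} [CommRing A]
    [HopfAlgebra k A] (S : Subalgebra k A) : Prop :=
  ∃ D ∈ 𝒞, ∃ f : D.carrier →ₐ[k] A, IsHopfHom f ∧ Function.Injective f ∧ f.range = S

/-- A formation of (coordinate rings of) algebraic groups, Hopf-encoded. -/
structure IsFormation (𝒞 : Set (HopfAlg k)) : Prop where
  fg : ∀ B ∈ 𝒞, (⊤ : Subalgebra k B.carrier).FG
  nontrivial : ∃ B ∈ 𝒞, ¬ Function.Surjective (algebraMap k B.carrier)
  iso_closed : ∀ B ∈ 𝒞, ∀ B' : HopfAlg k,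
    (∃ e : B.carrier ≃ₐ[k] B'.carrier, IsHopfHom e.toAlgHom) → B' ∈ 𝒞
  sub_closed : ∀ B ∈ 𝒞, ∀ S : Subalgebra k B.carrier,
    IsHopfSubalgebra S → MemFormation 𝒞 S
  sup_closed : ∀ (A : HopfAlg k) (B₁ B₂ : Subalgebra k A.carrier),
    IsHopfSubalgebra B₁ → IsHopfSubalgebra B₂ →
    MemFormation 𝒞 B₁ → MemFormation 𝒞 B₂ → MemFormation 𝒞 (B₁ ⊔ B₂)

/-- `A` is pro-`𝒞`: every finitely generated Hopf subalgebra of `A` belongs to `𝒞`. -/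
def IsProC (𝒞 : Set (HopfAlg k)) (A : Type) [CommRing A] [HopfAlgebra k A] : Prop :=
  ∀ S : Subalgebra k A, S.FG → IsHopfSubalgebra S → MemFormation 𝒞 S

/-- The family `ι` of `k`-algebra homomorphisms `A → R` converges to `1`. -/
def ConvergesToOne {A : Type} [CommRing A] [HopfAlgebra k A]
    {R : Type} [CommRing R] [Algebra k R] {X : Type} (ι : X → (A →ₐ[k] R)) : Prop :=
  ∀ S : Subalgebra k A, S.FG → IsHopfSubalgebra S →
    {x : X | ∃ a ∈ S, ι x a ≠ algebraMap k R (Coalgebra.counit (R := k) a)}.Finite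

/-- The only Hopf ideal of `A` contained in the intersection of the kernels of the `ι x`
is the zero ideal. -/
def HopfGenerates {A : Type} [CommRing A] [HopfAlgebra k A]
    {R : Type} [CommRing R] [Algebra k R] {X : Type} (ι : X → (A →ₐ[k] R)) : Prop :=
  ∀ I : Ideal A, IsHopfIdeal k I → (∀ x : X, I ≤ RingHom.ker (ι x).toRingHom) → I = ⊥

/-- `(A, ι)` is the free pro-`𝒞` group on `X` over `R`. -/
structure IsFreeProC (𝒞 : Set (HopfAlg k)) (R : Type) [CommRing R] [Algebra k R]
    (X : Type) (A : Type) [CommRing A] [HopfAlgebra k A]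
    (ι : X → (A →ₐ[k] R)) : Prop where
  proC : IsProC 𝒞 A
  conv : ConvergesToOne ι
  gen : HopfGenerates ι
  univ : ∀ (A' : HopfAlg k) (φ : X → (A'.carrier →ₐ[k] R)),
    ConvergesToOne φ → HopfGenerates φ →
    ∃! u : A'.carrier →ₐ[k] A, IsHopfHom u ∧ ∀ x : X, φ x = (ι x).comp u

/-- `A` is a saturated pro-`𝒞` Hopf algebra: every nontrivial pro-`𝒞` embedding problem
with the appropriate size restrictions has a solution. -/
def IsSaturated (𝒞 : Set (HopfAlg k)) (A : Type) [CommRing A] [HopfAlgebra k A] : Prop :=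
  ∀ (B C : HopfAlg k) (f : C.carrier →ₐ[k] B.carrier) (g : C.carrier →ₐ[k] A),
    IsHopfHom f → IsHopfHom g → Function.Injective f → Function.Injective g →
    ¬ Function.Surjective f → IsProC 𝒞 B.carrier →
    ((⊤ : Subalgebra k C.carrier).FG ∨ Module.rank k C.carrier < Module.rank k A) →
    ((⊤ : Subalgebra k B.carrier).FG ∨ Module.rank k B.carrier ≤ Module.rank k A) →
    ∃ h : B.carrier →ₐ[k] A, IsHopfHom h ∧ Function.Injective h ∧ h.comp f = g

end Prelim

set_option linter.unusedVariables false
set_option linter.unusedSectionVars false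
set_option maxHeartbeats 1000000

noncomputable section ConvAux

open Coalgebra

variable {k : Type} [Field k]

section Conv

variable {C : Type} [AddCommGroup C] [Module k C] [Coalgebra k C]
variable {L : Type} [CommRing L] [Algebra k L]

/-- Convolution product on linear maps from a coalgebra to an algebra. -/
def conv (f g : C →ₗ[k] L) : C →ₗ[k] L :=
  LinearMap.mul' k L ∘ₗ TensorProduct.map f g ∘ₗ Coalgebra.comul

/-- Convolution unit. -/
def convOne : C →ₗ[k] L := Algebra.linearMap k L ∘ₗ Coalgebra.counit

lemma convOne_apply (a : C) : (convOne (k := k) (L := L)) a = algebraMap k L (counit a) := rfl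

lemma conv_repr (f g : C →ₗ[k] L) {a : C} {ι : Type*} (r : Coalgebra.Repr k a ι) :
    conv f g a = ∑ i ∈ r.index, f (r.left i) * g (r.right i) := by
  simp only [conv, LinearMap.comp_apply, ← r.eq, map_sum, TensorProduct.map_tmul,
    LinearMap.mul'_apply]

lemma conv_one (f : C →ₗ[k] L) : conv f convOne = f := by
  ext a
  have r := Coalgebra.Repr.arbitrary k a
  have h1 : ∑ i ∈ r.index, (counit (R := k) (r.right i)) • (r.left i) = a := by
    have h := congrArg (TensorProduct.rid k C) (Coalgebra.sum_tmul_counit_eq (R := k) r)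
    rw [map_sum] at h
    simp only [TensorProduct.rid_tmul, one_smul] at h
    exact h
  rw [conv_repr f convOne r]
  calc ∑ i ∈ r.index, f (r.left i) * convOne (r.right i)
      = ∑ i ∈ r.index, (counit (R := k) (r.right i)) • f (r.left i) := by
        refine Finset.sum_congr rfl fun i _ => ?_
        rw [convOne_apply, Algebra.algebraMap_eq_smul_one, mul_smul_comm, mul_one]
    _ = f (∑ i ∈ r.index, (counit (R := k) (r.right i)) • (r.left i)) := by
        rw [map_sum]; simp only [map_smul]
    _ = f a := by rw [h1]

lemma one_conv (f : C →ₗ[k] L) : conv convOne f = f := by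
  ext a
  have r := Coalgebra.Repr.arbitrary k a
  have h1 : ∑ i ∈ r.index, (counit (R := k) (r.left i)) • (r.right i) = a := by
    have h := congrArg (TensorProduct.lid k C) (Coalgebra.sum_counit_tmul_eq (R := k) r)
    rw [map_sum] at h
    simp only [TensorProduct.lid_tmul, one_smul] at h
    exact h
  rw [conv_repr convOne f r]
  calc ∑ i ∈ r.index, convOne (r.left i) * f (r.right i)
      = ∑ i ∈ r.index, (counit (R := k) (r.left i)) • f (r.right i) := by
        refine Finset.sum_congr rfl fun i _ => ?_
        rw [convOne_apply, Algebra.algebraMap_eq_smul_one, smul_mul_assoc, one_mul]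
    _ = f (∑ i ∈ r.index, (counit (R := k) (r.left i)) • (r.right i)) := by
        rw [map_sum]; simp only [map_smul]
    _ = f a := by rw [h1]

lemma conv_assoc (f g h : C →ₗ[k] L) : conv (conv f g) h = conv f (conv g h) := by
  ext a
  have r := Coalgebra.Repr.arbitrary k a
  have r1 : ∀ i : r.ι, Coalgebra.Repr k (r.left i) (C × C) := fun i => Coalgebra.Repr.arbitrary k _
  have r2 : ∀ i : r.ι, Coalgebra.Repr k (r.right i) (C × C) := fun i => Coalgebra.Repr.arbitrary k _
  have key := Coalgebra.sum_tmul_tmul_eq r r1 r2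
  have := congrArg (LinearMap.mul' k L ∘ₗ
    TensorProduct.map f (LinearMap.mul' k L ∘ₗ TensorProduct.map g h)) key
  simp only [map_sum, LinearMap.comp_apply, TensorProduct.map_tmul, LinearMap.mul'_apply] at this
  rw [conv_repr (conv f g) h r, conv_repr f (conv g h) r]
  calc ∑ i ∈ r.index, conv f g (r.left i) * h (r.right i)
      = ∑ i ∈ r.index, ∑ j ∈ (r1 i).index,
          f ((r1 i).left j) * (g ((r1 i).right j) * h (r.right i)) := by
        refine Finset.sum_congr rfl fun i _ => ?_
        rw [conv_repr f g (r1 i), Finset.sum_mul]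
        exact Finset.sum_congr rfl fun j _ => mul_assoc _ _ _
    _ = ∑ i ∈ r.index, ∑ j ∈ (r2 i).index,
          f (r.left i) * (g ((r2 i).left j) * h ((r2 i).right j)) := this
    _ = ∑ i ∈ r.index, f (r.left i) * conv g h (r.right i) := by
        refine Finset.sum_congr rfl fun i _ => ?_
        rw [conv_repr g h (r2 i), Finset.mul_sum]

lemma conv_inv_unique {f g h : C →ₗ[k] L} (h1 : conv g f = convOne) (h2 : conv f h = convOne) :
    g = h := by
  have : conv g (conv f h) = conv (conv g f) h := (conv_assoc g f h).symm
  rwa [h2, h1, conv_one, one_conv] at this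

variable {L' : Type} [CommRing L'] [Algebra k L']

lemma algHom_comp_conv (φ : L →ₐ[k] L') (f g : C →ₗ[k] L) :
    φ.toLinearMap ∘ₗ conv f g = conv (φ.toLinearMap ∘ₗ f) (φ.toLinearMap ∘ₗ g) := by
  ext a
  have r := Coalgebra.Repr.arbitrary k a
  simp only [LinearMap.comp_apply, conv_repr _ _ r, map_sum, map_mul, AlgHom.toLinearMap_apply]

lemma algHom_comp_convOne (φ : L →ₐ[k] L') :
    φ.toLinearMap ∘ₗ (convOne (k := k) (C := C) (L := L)) = convOne := by
  ext a
  simp [convOne_apply, AlgHom.commutes]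

end Conv


section HopfStuff
open Coalgebra HopfAlgebra

variable {k : Type} [Field k]

section Antipode

variable {A : Type} [CommRing A] [HopfAlgebra k A]

lemma conv_antipode_id : conv (antipode (R := k) (A := A)) LinearMap.id = convOne := by
  ext a
  have r := Coalgebra.Repr.arbitrary k a
  rw [conv_repr _ _ r, convOne_apply]
  simpa using HopfAlgebra.sum_antipode_mul_eq_algebraMap_counit r

lemma conv_id_antipode : conv LinearMap.id (antipode (R := k) (A := A)) = convOne := by
  ext a
  have r := Coalgebra.Repr.arbitrary k a
  rw [conv_repr _ _ r, convOne_apply]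
  simpa using HopfAlgebra.sum_mul_antipode_eq_algebraMap_counit r

/-- The canonical `Repr` of `1`. -/
noncomputable def oneRepr : Coalgebra.Repr k (1 : A) Unit where
  index := {()}
  left _ := 1
  right _ := 1
  eq := by simp [Algebra.TensorProduct.one_def]

lemma antipode_one' : antipode (R := k) (1 : A) = 1 := by
  have := HopfAlgebra.sum_antipode_mul_eq_algebraMap_counit (R := k) (oneRepr (A := A))
  simpa [oneRepr] using this

/-- `Repr` of a pure tensor. -/
noncomputable def tmulRepr {a b : A} {ι₁ ι₂ : Type*} (ra : Coalgebra.Repr k a ι₁)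
    (rb : Coalgebra.Repr k b ι₂) :
    Coalgebra.Repr k (a ⊗ₜ[k] b : A ⊗[k] A) (ι₁ × ι₂) where
  index := ra.index ×ˢ rb.index
  left p := ra.left p.1 ⊗ₜ rb.left p.2
  right p := ra.right p.1 ⊗ₜ rb.right p.2
  eq := by
    show _ = TensorProduct.tensorTensorTensorComm k A A A A
      (TensorProduct.map Coalgebra.comul Coalgebra.comul (a ⊗ₜ b))
    rw [TensorProduct.map_tmul, ← ra.eq, ← rb.eq, TensorProduct.sum_tmul]
    rw [map_sum, Finset.sum_product]
    refine Finset.sum_congr rfl fun i _ => ?_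
    rw [TensorProduct.tmul_sum, map_sum]
    refine Finset.sum_congr rfl fun j _ => ?_
    rw [TensorProduct.tensorTensorTensorComm_tmul]

lemma counit_tmul (a b : A) : Coalgebra.counit (R := k) (a ⊗ₜ[k] b) =
    Coalgebra.counit (R := k) a * Coalgebra.counit (R := k) b := by
  rw [TensorProduct.counit_tmul, smul_eq_mul, mul_comm]

/-- `Repr` of a product, built from reprs of factors. -/
noncomputable def mulRepr {a b : A} {ι₁ ι₂ : Type*} (ra : Coalgebra.Repr k a ι₁)
    (rb : Coalgebra.Repr k b ι₂) :
    Coalgebra.Repr k (a * b) (ι₁ × ι₂) where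
  index := ra.index ×ˢ rb.index
  left p := ra.left p.1 * rb.left p.2
  right p := ra.right p.1 * rb.right p.2
  eq := by
    rw [Bialgebra.comul_mul, ← ra.eq, ← rb.eq, Finset.sum_mul_sum, Finset.sum_product]
    refine Finset.sum_congr rfl fun i _ => Finset.sum_congr rfl fun j _ => ?_
    rw [Algebra.TensorProduct.tmul_mul_tmul]

lemma antipode_mul' (a b : A) :
    antipode (R := k) (a * b) = antipode (R := k) a * antipode (R := k) b := by
  -- convolution on Hom(A ⊗ A, A)
  set G : (A ⊗[k] A) →ₗ[k] A := antipode (R := k) ∘ₗ LinearMap.mul' k A with hG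
  set F : (A ⊗[k] A) →ₗ[k] A :=
    LinearMap.mul' k A ∘ₗ TensorProduct.map (antipode (R := k)) (antipode (R := k)) with hF
  set μ : (A ⊗[k] A) →ₗ[k] A := LinearMap.mul' k A with hμ
  have claim1 : conv G μ = convOne := by
    apply TensorProduct.ext'
    intro x y
    have rx := Coalgebra.Repr.arbitrary k x
    have ry := Coalgebra.Repr.arbitrary k y
    rw [conv_repr _ _ (tmulRepr rx ry), convOne_apply, _root_.counit_tmul]
    have : ∑ p ∈ (tmulRepr rx ry).index,
        G ((tmulRepr rx ry).left p) * μ ((tmulRepr rx ry).right p)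
        = ∑ p ∈ (mulRepr rx ry).index,
            antipode (R := k) ((mulRepr rx ry).left p) * ((mulRepr rx ry).right p) := by
      refine Finset.sum_congr rfl fun p _ => ?_
      simp [hG, hF, hμ, tmulRepr, mulRepr]
    rw [this, HopfAlgebra.sum_antipode_mul_eq_algebraMap_counit (mulRepr rx ry)]
    rw [Bialgebra.counit_mul]
  have claim2 : conv μ F = convOne := by
    apply TensorProduct.ext'
    intro x y
    have rx := Coalgebra.Repr.arbitrary k x
    have ry := Coalgebra.Repr.arbitrary k y
    rw [conv_repr _ _ (tmulRepr rx ry), convOne_apply, _root_.counit_tmul]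
    have : ∑ p ∈ (tmulRepr rx ry).index,
        μ ((tmulRepr rx ry).left p) * F ((tmulRepr rx ry).right p)
        = (∑ i ∈ rx.index, rx.left i * antipode (R := k) (rx.right i)) *
          (∑ j ∈ ry.index, ry.left j * antipode (R := k) (ry.right j)) := by
      rw [Finset.sum_mul_sum]
      show ∑ p ∈ rx.index ×ˢ ry.index, _ = _
      rw [Finset.sum_product]
      refine Finset.sum_congr rfl fun i _ => Finset.sum_congr rfl fun j _ => ?_
      simp only [hμ, hF, tmulRepr, LinearMap.mul'_apply, LinearMap.comp_apply,
        TensorProduct.map_tmul]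
      ring
    rw [this, HopfAlgebra.sum_mul_antipode_eq_algebraMap_counit rx, HopfAlgebra.sum_mul_antipode_eq_algebraMap_counit ry, ← map_mul]
  have hGF : G = F := by
    have h1 : conv G (conv μ F) = conv (conv G μ) F := (conv_assoc G μ F).symm
    rw [claim2, claim1, conv_one, one_conv] at h1
    exact h1
  have := congrArg (fun (t : (A ⊗[k] A) →ₗ[k] A) => t (a ⊗ₜ[k] b)) hGF
  simpa [hG, hF, hμ] using this

/-- The antipode as an algebra homomorphism (commutative case). -/
noncomputable def antipodeAlgHom : A →ₐ[k] A :=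
  AlgHom.ofLinearMap (antipode (R := k)) antipode_one' antipode_mul'

lemma antipodeAlgHom_apply (a : A) : (antipodeAlgHom (k := k) (A := A)) a = antipode (R := k) a := rfl

lemma antipode_algebraMap (c : k) :
    antipode (R := k) (algebraMap k A c) = algebraMap k A c :=
  (antipodeAlgHom (k := k) (A := A)).commutes c

lemma antipode_antipode :
    (antipode (R := k) (A := A)) ∘ₗ antipode (R := k) = LinearMap.id := by
  have h1 : conv (LinearMap.id (R := k) (M := A)) (antipode (R := k)) = convOne :=
    conv_id_antipode
  have h2 : conv (antipode (R := k) (A := A))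
      ((antipode (R := k)) ∘ₗ antipode (R := k)) = convOne := by
    have := algHom_comp_conv (antipodeAlgHom (k := k) (A := A)) LinearMap.id
      (antipode (R := k))
    rw [conv_id_antipode, algHom_comp_convOne] at this
    have e1 : (antipodeAlgHom (k := k) (A := A)).toLinearMap ∘ₗ LinearMap.id
        = antipode (R := k) := rfl
    have e2 : (antipodeAlgHom (k := k) (A := A)).toLinearMap ∘ₗ antipode (R := k)
        = (antipode (R := k)) ∘ₗ antipode (R := k) := rfl
    rw [e1, e2] at this
    exact this.symm
  exact (conv_inv_unique h1 h2).symm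

lemma antipode_antipode_apply (a : A) :
    antipode (R := k) (antipode (R := k) a) = a :=
  congrArg (fun t => t a) (antipode_antipode (k := k) (A := A)) |>.trans rfl

lemma comul_antipode :
    (Coalgebra.comul (R := k) (A := A)) ∘ₗ antipode (R := k) =
      (TensorProduct.comm k A A).toLinearMap ∘ₗ
        TensorProduct.map (antipode (R := k)) (antipode (R := k)) ∘ₗ Coalgebra.comul := by
  set S := antipode (R := k) (A := A)
  set Δ : A →ₗ[k] A ⊗[k] A := Coalgebra.comul
  set j₁ : A →ₗ[k] A ⊗[k] A := (Algebra.TensorProduct.includeLeft : A →ₐ[k] A ⊗[k] A).toLinearMap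
  set j₂ : A →ₗ[k] A ⊗[k] A :=
    (Algebra.TensorProduct.includeRight : A →ₐ[k] A ⊗[k] A).toLinearMap
  set T : A →ₗ[k] A ⊗[k] A := (TensorProduct.comm k A A).toLinearMap ∘ₗ
    TensorProduct.map S S ∘ₗ Coalgebra.comul
  have hΔ : Δ = conv j₁ j₂ := by
    ext a
    have r := Coalgebra.Repr.arbitrary k a
    rw [conv_repr _ _ r]
    calc Δ a = ∑ i ∈ r.index, r.left i ⊗ₜ[k] r.right i := r.eq.symm
      _ = _ := by
        refine Finset.sum_congr rfl fun i _ => ?_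
        simp [j₁, j₂, Algebra.TensorProduct.tmul_mul_tmul]
  have hT : T = conv (j₂ ∘ₗ S) (j₁ ∘ₗ S) := by
    ext a
    have r := Coalgebra.Repr.arbitrary k a
    rw [conv_repr _ _ r]
    calc T a = ∑ i ∈ r.index, (S (r.right i)) ⊗ₜ[k] (S (r.left i)) := by
          simp only [T, LinearMap.comp_apply, ← r.eq, map_sum, TensorProduct.map_tmul,
            TensorProduct.comm_tmul, LinearEquiv.coe_coe]
      _ = _ := by
        refine Finset.sum_congr rfl fun i _ => ?_
        simp [j₁, j₂, Algebra.TensorProduct.tmul_mul_tmul]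
  -- Δ ∘ S is a two-sided convolution inverse of Δ
  have hL : conv (Δ ∘ₗ S) Δ = convOne := by
    have := algHom_comp_conv (Bialgebra.comulAlgHom k A) S LinearMap.id
    rw [conv_antipode_id, algHom_comp_convOne] at this
    have e1 : (Bialgebra.comulAlgHom k A).toLinearMap ∘ₗ S = Δ ∘ₗ S := rfl
    have e2 : (Bialgebra.comulAlgHom k A).toLinearMap ∘ₗ LinearMap.id = Δ := rfl
    rw [e1, e2] at this
    exact this.symm
  -- T is a right convolution inverse of Δ
  have hR : conv Δ T = convOne := by
    rw [hΔ, hT, conv_assoc, ← conv_assoc j₂ (j₂ ∘ₗ S) (j₁ ∘ₗ S)]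
    have hj2 : conv j₂ (j₂ ∘ₗ S) = convOne := by
      have := algHom_comp_conv (Algebra.TensorProduct.includeRight : A →ₐ[k] A ⊗[k] A)
        LinearMap.id S
      rw [conv_id_antipode, algHom_comp_convOne] at this
      exact this.symm
    rw [hj2, one_conv]
    have := algHom_comp_conv (Algebra.TensorProduct.includeLeft : A →ₐ[k] A ⊗[k] A)
      LinearMap.id S
    rw [conv_id_antipode, algHom_comp_convOne] at this
    exact this.symm
  have : Δ ∘ₗ S = T := conv_inv_unique hL hR
  exact this

lemma comul_antipode_apply (a : A) :
    Coalgebra.comul (R := k) (antipode (R := k) a) =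
      (TensorProduct.comm k A A) (TensorProduct.map (antipode (R := k)) (antipode (R := k))
        (Coalgebra.comul a)) :=
  congrArg (fun t => t a) (comul_antipode (k := k) (A := A))

end Antipode

section HopfHom
open Coalgebra HopfAlgebra

variable {A₁ A₂ : Type} [CommRing A₁] [HopfAlgebra k A₁] [CommRing A₂] [HopfAlgebra k A₂]
variable {f : A₁ →ₐ[k] A₂}

/-- Push a Repr forward along a Hopf hom. -/
noncomputable def pushRepr (hf : IsHopfHom f) {a : A₁} {ι : Type*} (r : Coalgebra.Repr k a ι) :
    Coalgebra.Repr k (f a) ι where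
  index := r.index
  left i := f (r.left i)
  right i := f (r.right i)
  eq := by
    rw [hf a, ← r.eq, map_sum]
    simp [TensorProduct.map_tmul]

lemma counit_hopfHom (hf : IsHopfHom f) (hinj : Function.Injective f) (a : A₁) :
    counit (R := k) (f a) = counit (R := k) a := by
  have r := Coalgebra.Repr.arbitrary k a
  -- Step 1 : ∑ ε₂(f lᵢ) • rᵢ = a
  have e0 := Coalgebra.sum_counit_tmul_eq (R := k) (pushRepr hf r)
  have e1 : ∑ i ∈ r.index, counit (R := k) (f (r.left i)) • (r.right i) = a := by
    apply hinj
    have h := congrArg (TensorProduct.lid k A₂) e0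
    rw [map_sum] at h
    simp only [TensorProduct.lid_tmul, one_smul, pushRepr] at h
    rw [map_sum]
    simpa only [map_smul] using h
  -- Step 2 : a = ∑ ε₁(rᵢ) • lᵢ
  have e2 : ∑ i ∈ r.index, counit (R := k) (r.right i) • (r.left i) = a := by
    have h := congrArg (TensorProduct.rid k A₁) (Coalgebra.sum_tmul_counit_eq (R := k) r)
    rw [map_sum] at h
    simp only [TensorProduct.rid_tmul, one_smul] at h
    exact h
  calc counit (R := k) (f a)
      = counit (R := k) (f (∑ i ∈ r.index, counit (R := k) (r.right i) • (r.left i))) := by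
        rw [e2]
    _ = ∑ i ∈ r.index, counit (R := k) (r.right i) * counit (R := k) (f (r.left i)) := by
        rw [map_sum, map_sum]
        refine Finset.sum_congr rfl fun i _ => ?_
        rw [map_smul, map_smul, smul_eq_mul]
    _ = counit (R := k) (∑ i ∈ r.index, counit (R := k) (f (r.left i)) • (r.right i)) := by
        rw [map_sum]
        refine Finset.sum_congr rfl fun i _ => ?_
        rw [map_smul, smul_eq_mul, mul_comm]
    _ = counit (R := k) a := by rw [e1]

lemma antipode_hopfHom (hf : IsHopfHom f) (hinj : Function.Injective f) (a : A₁) :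
    antipode (R := k) (f a) = f (antipode (R := k) a) := by
  have h1 : conv (f.toLinearMap ∘ₗ antipode (R := k)) f.toLinearMap = convOne := by
    ext x
    have r := Coalgebra.Repr.arbitrary k x
    rw [conv_repr _ _ r, convOne_apply]
    calc ∑ i ∈ r.index, f (antipode (R := k) (r.left i)) * f (r.right i)
        = f (∑ i ∈ r.index, antipode (R := k) (r.left i) * (r.right i)) := by
          rw [map_sum]; simp only [map_mul]
      _ = algebraMap k A₂ (counit (R := k) x) := by
          rw [HopfAlgebra.sum_antipode_mul_eq_algebraMap_counit r, AlgHom.commutes]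
  have h2 : conv f.toLinearMap ((antipode (R := k)) ∘ₗ f.toLinearMap) = convOne := by
    ext x
    have r := Coalgebra.Repr.arbitrary k x
    rw [conv_repr _ _ r, convOne_apply]
    calc ∑ i ∈ r.index, f (r.left i) * antipode (R := k) (f (r.right i))
        = ∑ i ∈ (pushRepr hf r).index,
            (pushRepr hf r).left i * antipode (R := k) ((pushRepr hf r).right i) := rfl
      _ = algebraMap k A₂ (counit (R := k) (f x)) := HopfAlgebra.sum_mul_antipode_eq_algebraMap_counit _
      _ = algebraMap k A₂ (counit (R := k) x) := by rw [counit_hopfHom hf hinj]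
  have := conv_inv_unique h1 h2
  exact (congrArg (fun (t : A₁ →ₗ[k] A₂) => t a) this).symm

end HopfHom
end HopfStuff


noncomputable section TensorAux

variable {k : Type} [Field k]
variable {M N P Q : Type} [AddCommGroup M] [Module k M] [AddCommGroup N] [Module k N]
  [AddCommGroup P] [Module k P] [AddCommGroup Q] [Module k Q]

lemma map_tensor_injective (f : M →ₗ[k] P) (g : N →ₗ[k] Q)
    (hf : Function.Injective f) (hg : Function.Injective g) :
    Function.Injective (TensorProduct.map f g) := by
  rw [← LinearMap.lTensor_comp_rTensor]
  exact (Module.Flat.lTensor_preserves_injective_linearMap (M := P) g hg).comp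
    (Module.Flat.rTensor_preserves_injective_linearMap (M := N) f hf)

/-- Basis expansion of elements of `X ⊗ W`, `X` finite-dimensional. -/
lemma basis_tensor_expand {ι : Type} [Fintype ι] {X W : Type} [AddCommGroup X] [Module k X]
    [AddCommGroup W] [Module k W] (e : Module.Basis ι k X) (w : X ⊗[k] W) :
    w = ∑ i, e i ⊗ₜ[k] ((TensorProduct.lid k W) ((e.coord i).rTensor W w)) := by
  induction w with
  | zero => simp
  | tmul x m =>
      simp only [LinearMap.rTensor_tmul, TensorProduct.lid_tmul]
      calc x ⊗ₜ[k] m = (∑ i, e.repr x i • e i) ⊗ₜ[k] m := by rw [Module.Basis.sum_repr]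
        _ = ∑ i, e i ⊗ₜ[k] ((e.coord i) x • m) := by
            rw [TensorProduct.sum_tmul]
            refine Finset.sum_congr rfl fun i _ => ?_
            rw [TensorProduct.smul_tmul, Module.Basis.coord_apply]
  | add u v hu hv =>
      have : ∀ i : ι, e i ⊗ₜ[k] ((TensorProduct.lid k W) ((e.coord i).rTensor W (u + v)))
          = e i ⊗ₜ[k] ((TensorProduct.lid k W) ((e.coord i).rTensor W u))
            + e i ⊗ₜ[k] ((TensorProduct.lid k W) ((e.coord i).rTensor W v)) := fun i => by
        rw [map_add, map_add, TensorProduct.tmul_add]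
      rw [Finset.sum_congr rfl fun i _ => this i, Finset.sum_add_distrib, ← hu, ← hv]

/-- Intersection of `V ⊗ A` and `A ⊗ V` is contained in the image of `V ⊗ V`, via projections. -/
lemma mem_range_map_of_mem_ranges {V W : Submodule k M} {t : M ⊗[k] M}
    (h1 : t ∈ LinearMap.range (V.subtype.rTensor M))
    (h2 : t ∈ LinearMap.range ((W.subtype).lTensor M)) :
    t ∈ LinearMap.range (TensorProduct.map V.subtype W.subtype) := by
  obtain ⟨p, hp⟩ := Submodule.exists_isCompl V
  obtain ⟨q, hq⟩ := Submodule.exists_isCompl W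
  set πV : M →ₗ[k] V := V.linearProjOfIsCompl p hp
  set πW : M →ₗ[k] W := W.linearProjOfIsCompl q hq
  obtain ⟨u, hu⟩ := h1
  obtain ⟨v, hv⟩ := h2
  set πV' : M →ₗ[k] M := V.subtype ∘ₗ πV with hπV'
  set πW' : M →ₗ[k] M := W.subtype ∘ₗ πW with hπW'
  have hV : πV' ∘ₗ V.subtype = V.subtype := by
    ext x
    simp only [hπV', LinearMap.comp_apply, Submodule.subtype_apply]
    exact congrArg Subtype.val (Submodule.linearProjOfIsCompl_apply_left hp x)
  have hW : πW' ∘ₗ W.subtype = W.subtype := by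
    ext x
    simp only [hπW', LinearMap.comp_apply, Submodule.subtype_apply]
    exact congrArg Subtype.val (Submodule.linearProjOfIsCompl_apply_left hq x)
  have ha : (πV'.rTensor M) t = t := by
    rw [← hu, ← LinearMap.comp_apply, ← LinearMap.rTensor_comp, hV]
  have hb : (πW'.lTensor M) t = t := by
    rw [← hv, ← LinearMap.comp_apply, ← LinearMap.lTensor_comp, hW]
  have hc : t = (TensorProduct.map πV' πW') t := by
    conv_lhs => rw [← hb, ← ha]
    rw [← LinearMap.comp_apply, LinearMap.lTensor_comp_rTensor]
  refine ⟨(TensorProduct.map πV πW) t, ?_⟩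
  rw [← LinearMap.comp_apply, ← TensorProduct.map_comp, ← hπV', ← hπW', ← hc]

end TensorAux


noncomputable section CoassocAux
open Coalgebra

variable {k : Type} [Field k]
variable {A : Type} [AddCommGroup A] [Module k A] [Coalgebra k A]

/-- Left coordinate extraction map. -/
def lcoord (φ : A →ₗ[k] k) : A ⊗[k] A →ₗ[k] A :=
  (TensorProduct.lid k A).toLinearMap ∘ₗ φ.rTensor A

/-- Right coordinate extraction map. -/
def rcoord (ψ : A →ₗ[k] k) : A ⊗[k] A →ₗ[k] A :=
  (TensorProduct.rid k A).toLinearMap ∘ₗ ψ.lTensor A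

@[simp] lemma lcoord_tmul (φ : A →ₗ[k] k) (x y : A) : lcoord φ (x ⊗ₜ y) = φ x • y := by
  simp [lcoord]

@[simp] lemma rcoord_tmul (ψ : A →ₗ[k] k) (x y : A) : rcoord ψ (x ⊗ₜ y) = ψ y • x := by
  simp [rcoord]

lemma coassoc_lcoord (φ : A →ₗ[k] k) {c : A} {ι : Type*} (rc : Coalgebra.Repr k c ι) :
    ∑ j ∈ rc.index, φ (rc.left j) • (Coalgebra.comul (R := k) (rc.right j)) =
    ∑ j ∈ rc.index, (lcoord φ (Coalgebra.comul (R := k) (rc.left j))) ⊗ₜ[k] rc.right j := by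
  have SL : ∀ (w : A ⊗[k] A) (y : A),
      (TensorProduct.lid k (A ⊗[k] A)) ((φ.rTensor (A ⊗[k] A))
        ((TensorProduct.assoc k A A A) (w ⊗ₜ y))) = (lcoord φ w) ⊗ₜ[k] y := by
    intro w y
    induction w with
    | zero => simp
    | tmul a b => simp [TensorProduct.assoc_tmul, TensorProduct.smul_tmul']
    | add u v hu hv =>
        rw [TensorProduct.add_tmul, map_add, map_add, map_add, hu, hv, map_add,
          TensorProduct.add_tmul]
  have h := Coalgebra.coassoc_apply (R := k) c
  rw [← rc.eq, map_sum, map_sum, map_sum] at h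
  simp only [LinearMap.rTensor_tmul, LinearMap.lTensor_tmul] at h
  have h2 := congrArg ((TensorProduct.lid k (A ⊗[k] A)).toLinearMap ∘ₗ
    (φ.rTensor (A ⊗[k] A))) h
  rw [map_sum, map_sum] at h2
  calc ∑ j ∈ rc.index, φ (rc.left j) • (Coalgebra.comul (R := k) (rc.right j))
      = ∑ j ∈ rc.index, ((TensorProduct.lid k (A ⊗[k] A)).toLinearMap ∘ₗ
          (φ.rTensor (A ⊗[k] A))) (rc.left j ⊗ₜ Coalgebra.comul (R := k) (rc.right j)) := by
        refine Finset.sum_congr rfl fun j _ => ?_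
        simp
    _ = ∑ j ∈ rc.index, ((TensorProduct.lid k (A ⊗[k] A)).toLinearMap ∘ₗ
          (φ.rTensor (A ⊗[k] A)))
          ((TensorProduct.assoc k A A A) (Coalgebra.comul (R := k) (rc.left j) ⊗ₜ rc.right j)) :=
        h2.symm
    _ = ∑ j ∈ rc.index, (lcoord φ (Coalgebra.comul (R := k) (rc.left j))) ⊗ₜ[k] rc.right j := by
        refine Finset.sum_congr rfl fun j _ => SL _ _

lemma coassoc_rcoord (ψ : A →ₗ[k] k) {c : A} {ι : Type*} (rc : Coalgebra.Repr k c ι) :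
    ∑ j ∈ rc.index, ψ (rc.right j) • (Coalgebra.comul (R := k) (rc.left j)) =
    ∑ j ∈ rc.index, rc.left j ⊗ₜ[k] (rcoord ψ (Coalgebra.comul (R := k) (rc.right j))) := by
  have SL : ∀ (x : A) (w : A ⊗[k] A),
      (TensorProduct.rid k (A ⊗[k] A)) ((ψ.lTensor (A ⊗[k] A))
        ((TensorProduct.assoc k A A A).symm (x ⊗ₜ w))) = x ⊗ₜ[k] (rcoord ψ w) := by
    intro x w
    induction w with
    | zero => simp
    | tmul a b =>
        simp only [TensorProduct.assoc_symm_tmul, LinearMap.lTensor_tmul,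
          TensorProduct.rid_tmul, rcoord_tmul, TensorProduct.tmul_smul]
    | add u v hu hv =>
        rw [TensorProduct.tmul_add, map_add, map_add, map_add, hu, hv, map_add,
          TensorProduct.tmul_add]
  have h := Coalgebra.coassoc_symm_apply (R := k) c
  rw [← rc.eq, map_sum, map_sum, map_sum] at h
  simp only [LinearMap.rTensor_tmul, LinearMap.lTensor_tmul] at h
  have h2 := congrArg ((TensorProduct.rid k (A ⊗[k] A)).toLinearMap ∘ₗ
    (ψ.lTensor (A ⊗[k] A))) h
  rw [map_sum, map_sum] at h2
  calc ∑ j ∈ rc.index, ψ (rc.right j) • (Coalgebra.comul (R := k) (rc.left j))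
      = ∑ j ∈ rc.index, ((TensorProduct.rid k (A ⊗[k] A)).toLinearMap ∘ₗ
          (ψ.lTensor (A ⊗[k] A))) (Coalgebra.comul (R := k) (rc.left j) ⊗ₜ rc.right j) := by
        refine Finset.sum_congr rfl fun j _ => ?_
        simp
    _ = ∑ j ∈ rc.index, ((TensorProduct.rid k (A ⊗[k] A)).toLinearMap ∘ₗ
          (ψ.lTensor (A ⊗[k] A)))
          ((TensorProduct.assoc k A A A).symm (rc.left j ⊗ₜ Coalgebra.comul (R := k) (rc.right j))) :=
        h2.symm
    _ = ∑ j ∈ rc.index, rc.left j ⊗ₜ[k] (rcoord ψ (Coalgebra.comul (R := k) (rc.right j))) := by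
        refine Finset.sum_congr rfl fun j _ => SL _ _

end CoassocAux


end ConvAux


noncomputable section LocalFin
open Coalgebra HopfAlgebra TensorProduct

variable {k : Type} [Field k]

/-- Generic monotonicity for ranges of tensor-product maps. -/
lemma range_map_le_of_le {M M' P1 P2 Q1 Q2 : Type}
    [AddCommGroup M] [Module k M] [AddCommGroup M'] [Module k M']
    [AddCommGroup P1] [Module k P1] [AddCommGroup P2] [Module k P2]
    [AddCommGroup Q1] [Module k Q1] [AddCommGroup Q2] [Module k Q2]
    {f1 : P1 →ₗ[k] M} {f2 : P2 →ₗ[k] M'} {g1 : Q1 →ₗ[k] M} {g2 : Q2 →ₗ[k] M'}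
    (h1 : LinearMap.range f1 ≤ LinearMap.range g1)
    (h2 : LinearMap.range f2 ≤ LinearMap.range g2) :
    LinearMap.range (TensorProduct.map f1 f2) ≤ LinearMap.range (TensorProduct.map g1 g2) := by
  rw [TensorProduct.range_map_eq_span_tmul, TensorProduct.range_map_eq_span_tmul]
  refine Submodule.span_le.2 ?_
  rintro _ ⟨m, n, rfl⟩
  obtain ⟨q1, hq1⟩ := h1 ⟨m, rfl⟩
  obtain ⟨q2, hq2⟩ := h2 ⟨n, rfl⟩
  exact Submodule.subset_span ⟨q1, q2, by rw [hq1, hq2]⟩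

lemma sum_swap3 {α γ : Type} {κ : γ → Type} {M : Type} [AddCommMonoid M]
    (s1 : Finset α) (s3 : Finset γ) (s4 : ∀ c : γ, Finset (κ c)) (f : α → (c : γ) → κ c → M) :
    ∑ i ∈ s3, ∑ j ∈ s4 i, ∑ p ∈ s1, f p i j = ∑ p ∈ s1, ∑ i ∈ s3, ∑ j ∈ s4 i, f p i j :=
  (Finset.sum_congr rfl fun i _ => Finset.sum_comm).trans Finset.sum_comm

lemma sum_swap4 {α β γ : Type} {κ : γ → Type} {M : Type} [AddCommMonoid M]
    (s1 : Finset α) (s2 : Finset β) (s3 : Finset γ) (s4 : ∀ c : γ, Finset (κ c))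
    (f : α → β → (c : γ) → κ c → M) :
    ∑ i ∈ s3, ∑ j ∈ s4 i, ∑ p ∈ s1, ∑ q ∈ s2, f p q i j
      = ∑ p ∈ s1, ∑ q ∈ s2, ∑ i ∈ s3, ∑ j ∈ s4 i, f p q i j :=
  (sum_swap3 s1 s3 s4 (fun p i j => ∑ q ∈ s2, f p q i j)).trans
    (Finset.sum_congr rfl fun p _ => sum_swap3 s2 s3 s4 (fun q i j => f p q i j))

section ReprCounit
variable {k : Type} [Field k] {A : Type} [AddCommGroup A] [Module k A] [Coalgebra k A]

lemma repr_counit_left {c : A} {ι : Type*} (r : Coalgebra.Repr k c ι) :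
    ∑ j ∈ r.index, (Coalgebra.counit (R := k) (r.left j)) • r.right j = c := by
  have h := congrArg (TensorProduct.lid k A) (Coalgebra.sum_counit_tmul_eq (R := k) r)
  rw [map_sum] at h
  simpa only [TensorProduct.lid_tmul, one_smul] using h

lemma repr_counit_right {c : A} {ι : Type*} (r : Coalgebra.Repr k c ι) :
    ∑ j ∈ r.index, (Coalgebra.counit (R := k) (r.right j)) • r.left j = c := by
  have h := congrArg (TensorProduct.rid k A) (Coalgebra.sum_tmul_counit_eq (R := k) r)
  rw [map_sum] at h
  simpa only [TensorProduct.rid_tmul, one_smul] using h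

end ReprCounit

variable {A : Type} [CommRing A] [HopfAlgebra k A]

/-- Choose a representation of `comul c` with components in `B`. -/
lemma exists_bRepr {B : Subalgebra k A} {c : A}
    (hc : Coalgebra.comul (R := k) c ∈
      LinearMap.range (TensorProduct.map B.val.toLinearMap B.val.toLinearMap)) :
    ∃ r : Coalgebra.Repr.{0, 0, 0} k c (↥B × ↥B), (∀ i, r.left i ∈ B) ∧ (∀ i, r.right i ∈ B) := by
  obtain ⟨w, hw⟩ := hc
  obtain ⟨s, hs⟩ := TensorProduct.exists_finset w
  refine ⟨Coalgebra.Repr.mk (ι := ↥B × ↥B) s (fun p => (p.1 : A)) (fun p => (p.2 : A)) ?_,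
    fun p => p.1.2, fun p => p.2.2⟩
  rw [← hw, hs, map_sum]
  simp [TensorProduct.map_tmul]

lemma exists_fin_dim_subcoalgebra (B : Subalgebra k A)
    (hB : ∀ c ∈ B, Coalgebra.comul (R := k) c ∈
      LinearMap.range (TensorProduct.map B.val.toLinearMap B.val.toLinearMap))
    {b : A} (hb : b ∈ B) :
    ∃ V : Submodule k A, V.FG ∧ V ≤ Subalgebra.toSubmodule B ∧ b ∈ V ∧
      ∀ v ∈ V, Coalgebra.comul (R := k) v ∈
        LinearMap.range (TensorProduct.map V.subtype V.subtype) := by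
  classical
  -- representations with components in B
  obtain ⟨rb, hbl, hbr⟩ := exists_bRepr (hB b hb)
  have rc : ∀ i : rb.ι, { r : Coalgebra.Repr.{0, 0, 0} k (rb.left i) (↥B × ↥B) //
      (∀ j, r.left j ∈ B) ∧ (∀ j, r.right j ∈ B) } := fun i =>
    Classical.indefiniteDescription _ (exists_bRepr (hB _ (hbl i)))
  have rd : ∀ i : rb.ι, { r : Coalgebra.Repr.{0, 0, 0} k (rb.right i) (↥B × ↥B) //
      (∀ j, r.left j ∈ B) ∧ (∀ j, r.right j ∈ B) } := fun i =>
    Classical.indefiniteDescription _ (exists_bRepr (hB _ (hbr i)))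
  -- the spans of extreme components
  set Xs : Set A := ⋃ i ∈ rb.index, ((rc i).1.left '' (rc i).1.index) with hXs
  set Zs : Set A := ⋃ i ∈ rb.index, ((rd i).1.right '' (rd i).1.index) with hZs
  have hXsfin : Xs.Finite :=
    Set.Finite.biUnion rb.index.finite_toSet fun i _ => ((rc i).1.index.finite_toSet.image _)
  have hZsfin : Zs.Finite :=
    Set.Finite.biUnion rb.index.finite_toSet fun i _ => ((rd i).1.index.finite_toSet.image _)
  set X : Submodule k A := Submodule.span k Xs with hX
  set Z : Submodule k A := Submodule.span k Zs with hZ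
  haveI : FiniteDimensional k X := FiniteDimensional.span_of_finite k hXsfin
  haveI : FiniteDimensional k Z := FiniteDimensional.span_of_finite k hZsfin
  set eX := Module.finBasis k X with heX
  set eZ := Module.finBasis k Z with heZ
  obtain ⟨pX, hpX⟩ := Submodule.exists_isCompl X
  obtain ⟨pZ, hpZ⟩ := Submodule.exists_isCompl Z
  set φ : Fin (Module.finrank k X) → (A →ₗ[k] k) :=
    fun p => (eX.coord p) ∘ₗ (X.linearProjOfIsCompl pX hpX) with hφ
  set ψ : Fin (Module.finrank k Z) → (A →ₗ[k] k) :=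
    fun q => (eZ.coord q) ∘ₗ (Z.linearProjOfIsCompl pZ hpZ) with hψ
  -- basis expansions
  have hφsum : ∀ v ∈ X, ∑ p, (φ p v) • ((eX p : X) : A) = v := by
    intro v hv
    have h0 : X.linearProjOfIsCompl pX hpX v = ⟨v, hv⟩ :=
      Submodule.linearProjOfIsCompl_apply_left hpX ⟨v, hv⟩
    have h := congrArg X.subtype (eX.sum_repr ⟨v, hv⟩)
    rw [map_sum] at h
    simp only [map_smul, Submodule.subtype_apply] at h
    calc ∑ p, (φ p v) • ((eX p : X) : A)
        = ∑ p, (eX.repr ⟨v, hv⟩ p) • ((eX p : X) : A) := by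
          refine Finset.sum_congr rfl fun p _ => ?_
          simp only [hφ, LinearMap.comp_apply, h0, Module.Basis.coord_apply]
      _ = v := h
  have hψsum : ∀ v ∈ Z, ∑ q, (ψ q v) • ((eZ q : Z) : A) = v := by
    intro v hv
    have h0 : Z.linearProjOfIsCompl pZ hpZ v = ⟨v, hv⟩ :=
      Submodule.linearProjOfIsCompl_apply_left hpZ ⟨v, hv⟩
    have h := congrArg Z.subtype (eZ.sum_repr ⟨v, hv⟩)
    rw [map_sum] at h
    simp only [map_smul, Submodule.subtype_apply] at h
    calc ∑ q, (ψ q v) • ((eZ q : Z) : A)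
        = ∑ q, (eZ.repr ⟨v, hv⟩ q) • ((eZ q : Z) : A) := by
          refine Finset.sum_congr rfl fun q _ => ?_
          simp only [hψ, LinearMap.comp_apply, h0, Module.Basis.coord_apply]
      _ = v := h
  -- memberships
  have hxmem : ∀ i ∈ rb.index, ∀ j ∈ (rc i).1.index, (rc i).1.left j ∈ X := by
    intro i hi j hj
    refine Submodule.subset_span ?_
    exact Set.mem_biUnion hi ⟨j, hj, rfl⟩
  have hzmem : ∀ i ∈ rb.index, ∀ j ∈ (rd i).1.index, (rd i).1.right j ∈ Z := by
    intro i hi j hj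
    refine Submodule.subset_span ?_
    exact Set.mem_biUnion hi ⟨j, hj, rfl⟩
  have hdmem : ∀ i ∈ rb.index, rb.right i ∈ Z := by
    intro i hi
    have h := congrArg (TensorProduct.lid k A) (Coalgebra.sum_counit_tmul_eq (R := k) (rd i).1)
    rw [map_sum] at h
    simp only [TensorProduct.lid_tmul, one_smul] at h
    rw [← h]
    exact Submodule.sum_mem _ fun j hj => Submodule.smul_mem _ _ (hzmem i hi j hj)
  -- the middle family
  set m : Fin (Module.finrank k X) → Fin (Module.finrank k Z) → A := fun p q =>
    ∑ i ∈ rb.index, ∑ j ∈ (rc i).1.index,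
      (φ p ((rc i).1.left j) * ψ q (rb.right i)) • (rc i).1.right j with hm
  -- the alternative formula for m, via coassociativity
  have e1 : ∀ p q (u v w : A), ((lcoord (φ p)) ∘ₗ (LinearMap.lTensor A (rcoord (ψ q))))
      (u ⊗ₜ[k] (v ⊗ₜ[k] w)) = (φ p u * ψ q w) • v := by
    intro p q u v w
    simp only [LinearMap.comp_apply, LinearMap.lTensor_tmul, rcoord_tmul,
      TensorProduct.tmul_smul, map_smul, lcoord_tmul, smul_smul]
    rw [mul_comm]
  have hm' : ∀ p q, m p q = ∑ i ∈ rb.index, ∑ j ∈ (rd i).1.index,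
      (φ p (rb.left i) * ψ q ((rd i).1.right j)) • (rd i).1.left j := by
    intro p q
    have key := Coalgebra.sum_tmul_tmul_eq rb (fun i => (rc i).1) (fun i => (rd i).1)
    have h2 := congrArg ((lcoord (φ p)) ∘ₗ (LinearMap.lTensor A (rcoord (ψ q)))) key
    simp only [map_sum] at h2
    simp only [e1] at h2
    rw [hm]
    exact h2
  -- the span of the middle family
  set V : Submodule k A := Submodule.span k
    (Set.range fun pq : Fin (Module.finrank k X) × Fin (Module.finrank k Z) =>
      m pq.1 pq.2) with hV
  have hmV : ∀ p q, m p q ∈ V := fun p q => Submodule.subset_span ⟨(p, q), rfl⟩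
  have hVfg : V.FG := Submodule.fg_span (Set.finite_range _)
  have hmB : ∀ p q, m p q ∈ B := by
    intro p q
    rw [hm]
    exact sum_mem fun i _ => sum_mem fun j _ => B.smul_mem ((rc i).2.2 j) _
  have hVB : V ≤ Subalgebra.toSubmodule B := by
    rw [hV]
    refine Submodule.span_le.2 ?_
    rintro _ ⟨pq, rfl⟩
    exact hmB _ _
  -- counit expansions
  have hcounitX : ∀ v ∈ X, ∑ p, (Coalgebra.counit (R := k) ((eX p : X) : A)) * φ p v
      = Coalgebra.counit (R := k) v := by
    intro v hv
    have h := congrArg (Coalgebra.counit (R := k)) (hφsum v hv)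
    rw [map_sum] at h
    simp only [map_smul, smul_eq_mul] at h
    rw [← h]
    exact Finset.sum_congr rfl fun p _ => mul_comm _ _
  have hcounitZ : ∀ v ∈ Z, ∑ q, (Coalgebra.counit (R := k) ((eZ q : Z) : A)) * ψ q v
      = Coalgebra.counit (R := k) v := by
    intro v hv
    have h := congrArg (Coalgebra.counit (R := k)) (hψsum v hv)
    rw [map_sum] at h
    simp only [map_smul, smul_eq_mul] at h
    rw [← h]
    exact Finset.sum_congr rfl fun q _ => mul_comm _ _
  -- b is in V
  have hbV : b ∈ V := by
    have key : b = ∑ p, ∑ q, ((Coalgebra.counit (R := k) ((eX p : X) : A))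
        * (Coalgebra.counit (R := k) ((eZ q : Z) : A))) • m p q := by
      have expand : ∀ p q, ((Coalgebra.counit (R := k) ((eX p : X) : A))
          * (Coalgebra.counit (R := k) ((eZ q : Z) : A))) • m p q
          = ∑ i ∈ rb.index, ∑ j ∈ (rc i).1.index,
              (((Coalgebra.counit (R := k) ((eX p : X) : A)) * φ p ((rc i).1.left j))
                * ((Coalgebra.counit (R := k) ((eZ q : Z) : A)) * ψ q (rb.right i)))
                  • (rc i).1.right j := by
        intro p q
        rw [hm, Finset.smul_sum]
        refine Finset.sum_congr rfl fun i _ => ?_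
        rw [Finset.smul_sum]
        refine Finset.sum_congr rfl fun j _ => ?_
        rw [smul_smul]
        ring_nf
      calc b = ∑ i ∈ rb.index, (Coalgebra.counit (R := k) (rb.right i)) • rb.left i :=
            (repr_counit_right rb).symm
        _ = ∑ i ∈ rb.index, ∑ j ∈ (rc i).1.index,
              ((Coalgebra.counit (R := k) ((rc i).1.left j))
                * (Coalgebra.counit (R := k) (rb.right i))) • (rc i).1.right j := by
            refine Finset.sum_congr rfl fun i hi => ?_
            conv_lhs => rw [← repr_counit_left (rc i).1]
            rw [Finset.smul_sum]
            refine Finset.sum_congr rfl fun j hj => ?_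
            rw [smul_smul, mul_comm]
        _ = ∑ i ∈ rb.index, ∑ j ∈ (rc i).1.index,
              ((∑ p, (Coalgebra.counit (R := k) ((eX p : X) : A)) * φ p ((rc i).1.left j))
                * (∑ q, (Coalgebra.counit (R := k) ((eZ q : Z) : A)) * ψ q (rb.right i)))
                  • (rc i).1.right j := by
            refine Finset.sum_congr rfl fun i hi => Finset.sum_congr rfl fun j hj => ?_
            rw [hcounitX _ (hxmem i hi j hj), hcounitZ _ (hdmem i hi)]
        _ = ∑ i ∈ rb.index, ∑ j ∈ (rc i).1.index, ∑ p, ∑ q,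
              (((Coalgebra.counit (R := k) ((eX p : X) : A)) * φ p ((rc i).1.left j))
                * ((Coalgebra.counit (R := k) ((eZ q : Z) : A)) * ψ q (rb.right i)))
                  • (rc i).1.right j := by
            refine Finset.sum_congr rfl fun i hi => Finset.sum_congr rfl fun j hj => ?_
            rw [Finset.sum_mul_sum, Finset.sum_smul]
            exact Finset.sum_congr rfl fun p _ => Finset.sum_smul
        _ = ∑ p, ∑ q, ∑ i ∈ rb.index, ∑ j ∈ (rc i).1.index,
              (((Coalgebra.counit (R := k) ((eX p : X) : A)) * φ p ((rc i).1.left j))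
                * ((Coalgebra.counit (R := k) ((eZ q : Z) : A)) * ψ q (rb.right i)))
                  • (rc i).1.right j :=
            sum_swap4 _ _ _ _ _
        _ = ∑ p, ∑ q, ((Coalgebra.counit (R := k) ((eX p : X) : A))
            * (Coalgebra.counit (R := k) ((eZ q : Z) : A))) • m p q := by
            refine Finset.sum_congr rfl fun p _ => Finset.sum_congr rfl fun q _ =>
              (expand p q).symm
    rw [key]
    exact sum_mem fun p _ => sum_mem fun q _ => Submodule.smul_mem _ _ (hmV p q)
  -- comultiplication of m p q : left-hand form
  have hwX : ∀ (p : Fin (Module.finrank k X)) (v : A), v ∈ X →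
      lcoord (φ p) (Coalgebra.comul (R := k) v)
        = ∑ p', φ p' v • lcoord (φ p) (Coalgebra.comul (R := k) ((eX p' : X) : A)) := by
    intro p v hv
    conv_lhs => rw [← hφsum v hv]
    rw [map_sum, map_sum]
    simp only [map_smul]
  have hwZ : ∀ (q : Fin (Module.finrank k Z)) (v : A), v ∈ Z →
      rcoord (ψ q) (Coalgebra.comul (R := k) v)
        = ∑ q', ψ q' v • rcoord (ψ q) (Coalgebra.comul (R := k) ((eZ q' : Z) : A)) := by
    intro q v hv
    conv_lhs => rw [← hψsum v hv]
    rw [map_sum, map_sum]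
    simp only [map_smul]
  have hP3 : ∀ p q, Coalgebra.comul (R := k) (m p q)
      ∈ LinearMap.range (V.subtype.lTensor A) := by
    intro p q
    have key : Coalgebra.comul (R := k) (m p q)
        = ∑ p', (lcoord (φ p) (Coalgebra.comul (R := k) ((eX p' : X) : A))) ⊗ₜ[k] m p' q := by
      calc Coalgebra.comul (R := k) (m p q)
          = ∑ i ∈ rb.index, ψ q (rb.right i) •
              (∑ j ∈ (rc i).1.index, φ p ((rc i).1.left j) •
                Coalgebra.comul (R := k) ((rc i).1.right j)) := by
            rw [hm, map_sum]
            refine Finset.sum_congr rfl fun i _ => ?_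
            rw [map_sum, Finset.smul_sum]
            refine Finset.sum_congr rfl fun j _ => ?_
            rw [map_smul, smul_smul, mul_comm]
        _ = ∑ i ∈ rb.index, ψ q (rb.right i) •
              (∑ j ∈ (rc i).1.index,
                (lcoord (φ p) (Coalgebra.comul (R := k) ((rc i).1.left j))) ⊗ₜ[k]
                  (rc i).1.right j) := by
            refine Finset.sum_congr rfl fun i _ => ?_
            rw [coassoc_lcoord (φ p) (rc i).1]
        _ = ∑ i ∈ rb.index, ∑ j ∈ (rc i).1.index, ∑ p',
              (φ p' ((rc i).1.left j) * ψ q (rb.right i)) •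
                ((lcoord (φ p) (Coalgebra.comul (R := k) ((eX p' : X) : A))) ⊗ₜ[k]
                  (rc i).1.right j) := by
            refine Finset.sum_congr rfl fun i hi => ?_
            rw [Finset.smul_sum]
            refine Finset.sum_congr rfl fun j hj => ?_
            rw [hwX p _ (hxmem i hi j hj), TensorProduct.sum_tmul, Finset.smul_sum]
            refine Finset.sum_congr rfl fun p' _ => ?_
            rw [TensorProduct.smul_tmul', smul_smul, mul_comm (ψ q (rb.right i)) _]
            rw [TensorProduct.smul_tmul']
        _ = ∑ p', ∑ i ∈ rb.index, ∑ j ∈ (rc i).1.index,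
              (φ p' ((rc i).1.left j) * ψ q (rb.right i)) •
                ((lcoord (φ p) (Coalgebra.comul (R := k) ((eX p' : X) : A))) ⊗ₜ[k]
                  (rc i).1.right j) :=
            sum_swap3 _ _ _ _
        _ = ∑ p', (lcoord (φ p) (Coalgebra.comul (R := k) ((eX p' : X) : A))) ⊗ₜ[k] m p' q := by
            refine Finset.sum_congr rfl fun p' _ => ?_
            rw [hm, TensorProduct.tmul_sum]
            refine Finset.sum_congr rfl fun i _ => ?_
            rw [TensorProduct.tmul_sum]
            refine Finset.sum_congr rfl fun j _ => ?_
            rw [TensorProduct.tmul_smul]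
    refine ⟨∑ p', (lcoord (φ p) (Coalgebra.comul (R := k) ((eX p' : X) : A)))
      ⊗ₜ[k] (⟨m p' q, hmV p' q⟩ : V), ?_⟩
    rw [map_sum, key]
    rfl
  have hP4 : ∀ p q, Coalgebra.comul (R := k) (m p q)
      ∈ LinearMap.range (V.subtype.rTensor A) := by
    intro p q
    have key : Coalgebra.comul (R := k) (m p q)
        = ∑ q', m p q' ⊗ₜ[k] (rcoord (ψ q) (Coalgebra.comul (R := k) ((eZ q' : Z) : A))) := by
      calc Coalgebra.comul (R := k) (m p q)
          = ∑ i ∈ rb.index, φ p (rb.left i) •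
              (∑ j ∈ (rd i).1.index, ψ q ((rd i).1.right j) •
                Coalgebra.comul (R := k) ((rd i).1.left j)) := by
            rw [hm' p q, map_sum]
            refine Finset.sum_congr rfl fun i _ => ?_
            rw [map_sum, Finset.smul_sum]
            refine Finset.sum_congr rfl fun j _ => ?_
            rw [map_smul, smul_smul]
        _ = ∑ i ∈ rb.index, φ p (rb.left i) •
              (∑ j ∈ (rd i).1.index, (rd i).1.left j ⊗ₜ[k]
                (rcoord (ψ q) (Coalgebra.comul (R := k) ((rd i).1.right j)))) := by
            refine Finset.sum_congr rfl fun i _ => ?_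
            rw [coassoc_rcoord (ψ q) (rd i).1]
        _ = ∑ i ∈ rb.index, ∑ j ∈ (rd i).1.index, ∑ q',
              (φ p (rb.left i) * ψ q' ((rd i).1.right j)) •
                ((rd i).1.left j ⊗ₜ[k]
                  (rcoord (ψ q) (Coalgebra.comul (R := k) ((eZ q' : Z) : A)))) := by
            refine Finset.sum_congr rfl fun i hi => ?_
            rw [Finset.smul_sum]
            refine Finset.sum_congr rfl fun j hj => ?_
            rw [hwZ q _ (hzmem i hi j hj), TensorProduct.tmul_sum, Finset.smul_sum]
            refine Finset.sum_congr rfl fun q' _ => ?_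
            rw [TensorProduct.tmul_smul, smul_smul]
        _ = ∑ q', ∑ i ∈ rb.index, ∑ j ∈ (rd i).1.index,
              (φ p (rb.left i) * ψ q' ((rd i).1.right j)) •
                ((rd i).1.left j ⊗ₜ[k]
                  (rcoord (ψ q) (Coalgebra.comul (R := k) ((eZ q' : Z) : A)))) :=
            sum_swap3 _ _ _ _
        _ = ∑ q', m p q' ⊗ₜ[k]
              (rcoord (ψ q) (Coalgebra.comul (R := k) ((eZ q' : Z) : A))) := by
            refine Finset.sum_congr rfl fun q' _ => ?_
            rw [hm' p q', TensorProduct.sum_tmul]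
            refine Finset.sum_congr rfl fun i _ => ?_
            rw [TensorProduct.sum_tmul]
            refine Finset.sum_congr rfl fun j _ => ?_
            rw [TensorProduct.smul_tmul']
    refine ⟨∑ q', (⟨m p q', hmV p q'⟩ : V) ⊗ₜ[k]
      (rcoord (ψ q) (Coalgebra.comul (R := k) ((eZ q' : Z) : A))), ?_⟩
    rw [map_sum, key]
    rfl
  refine ⟨V, hVfg, hVB, hbV, ?_⟩
  have hle : V ≤ Submodule.comap (Coalgebra.comul (R := k) (A := A))
      (LinearMap.range (TensorProduct.map V.subtype V.subtype)) := by
    rw [hV]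
    refine Submodule.span_le.2 ?_
    rintro _ ⟨pq, rfl⟩
    exact mem_range_map_of_mem_ranges (hP4 pq.1 pq.2) (hP3 pq.1 pq.2)
  intro v hv
  exact hle hv

lemma algTensorMap_toLinearMap (S : Subalgebra k A) :
    (Algebra.TensorProduct.map S.val S.val).toLinearMap
      = TensorProduct.map S.val.toLinearMap S.val.toLinearMap := by
  apply TensorProduct.ext'
  intro x y
  rfl

lemma exists_fg_hopf_between (B : Subalgebra k A) (hB : IsHopfSubalgebra B)
    {b : A} (hb : b ∈ B) :
    ∃ S : Subalgebra k A, S ≤ B ∧ S.FG ∧ IsHopfSubalgebra S ∧ b ∈ S := by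
  obtain ⟨V, hVfg, hVB, hbV, hVco⟩ := exists_fin_dim_subcoalgebra B hB.1 hb
  set S0 : A →ₗ[k] A := antipode (R := k) with hS0
  set W : Submodule k A := V ⊔ V.map S0 with hW
  have hVW : V ≤ W := le_sup_left
  have hWB : W ≤ Subalgebra.toSubmodule B := by
    refine sup_le hVB ?_
    rintro _ ⟨v, hv, rfl⟩
    exact hB.2 v (hVB hv)
  have hWS : ∀ w ∈ W, antipode (R := k) w ∈ W := by
    intro w hw
    obtain ⟨x, hx, y, hy, rfl⟩ := Submodule.mem_sup.1 hw
    obtain ⟨v, hv, rfl⟩ := hy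
    rw [map_add]
    refine add_mem ((le_sup_right : V.map S0 ≤ W) (Submodule.mem_map_of_mem hx)) ?_
    show antipode (R := k) (antipode (R := k) v) ∈ W
    rw [antipode_antipode_apply]
    exact hVW hv
  have hWco : ∀ w ∈ W, Coalgebra.comul (R := k) w
      ∈ LinearMap.range (TensorProduct.map W.subtype W.subtype) := by
    have hsub : LinearMap.range V.subtype ≤ LinearMap.range W.subtype := by
      rw [Submodule.range_subtype, Submodule.range_subtype]
      exact hVW
    intro w hw
    obtain ⟨x, hx, y, hy, rfl⟩ := Submodule.mem_sup.1 hw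
    rw [map_add]
    refine add_mem (range_map_le_of_le hsub hsub (hVco x hx)) ?_
    obtain ⟨v, hv, rfl⟩ := hy
    show Coalgebra.comul (R := k) (antipode (R := k) v) ∈ _
    rw [comul_antipode_apply]
    obtain ⟨u, hu⟩ := hVco v hv
    have h1 : TensorProduct.map S0 S0 (Coalgebra.comul (R := k) v)
        = TensorProduct.map (S0 ∘ₗ V.subtype) (S0 ∘ₗ V.subtype) u := by
      rw [← hu, ← LinearMap.comp_apply, ← TensorProduct.map_comp]
    have h2 : LinearMap.range (S0 ∘ₗ V.subtype) ≤ LinearMap.range W.subtype := by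
      rintro _ ⟨x0, rfl⟩
      rw [Submodule.range_subtype]
      exact (le_sup_right : V.map S0 ≤ W) (Submodule.mem_map_of_mem x0.2)
    have h3 : TensorProduct.map S0 S0 (Coalgebra.comul (R := k) v)
        ∈ LinearMap.range (TensorProduct.map W.subtype W.subtype) := by
      rw [h1]
      exact range_map_le_of_le h2 h2 ⟨u, rfl⟩
    obtain ⟨t, ht⟩ := h3
    refine ⟨TensorProduct.comm k W W t, ?_⟩
    rw [TensorProduct.map_comm, ht]
  have hbW : b ∈ W := hVW hbV
  have hWfg : W.FG := hVfg.sup (hVfg.map _)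
  obtain ⟨tW, htW⟩ := hWfg
  set SA : Subalgebra k A := Algebra.adjoin k (W : Set A) with hSA
  have hWSA : W ≤ Subalgebra.toSubmodule SA := fun x hx => Algebra.subset_adjoin hx
  have hco : ∀ s ∈ SA, Coalgebra.comul (R := k) s
      ∈ LinearMap.range (TensorProduct.map SA.val.toLinearMap SA.val.toLinearMap) := by
    have hle : SA ≤ Subalgebra.comap (Bialgebra.comulAlgHom k A)
        ((Algebra.TensorProduct.map SA.val SA.val).range) := by
      apply Algebra.adjoin_le
      intro w hw
      show Bialgebra.comulAlgHom k A w ∈ (Algebra.TensorProduct.map SA.val SA.val).range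
      have h0 : Coalgebra.comul (R := k) w
          ∈ LinearMap.range (TensorProduct.map SA.val.toLinearMap SA.val.toLinearMap) := by
        refine range_map_le_of_le ?_ ?_ (hWco w hw) <;>
          · rintro _ ⟨x, rfl⟩
            exact ⟨⟨(x : A), hWSA x.2⟩, rfl⟩
      obtain ⟨u, hu⟩ := h0
      refine ⟨u, ?_⟩
      have h2 : (Algebra.TensorProduct.map SA.val SA.val) u
          = TensorProduct.map SA.val.toLinearMap SA.val.toLinearMap u :=
        DFunLike.congr_fun (algTensorMap_toLinearMap (k := k) SA) u
      exact h2.trans hu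
    intro s hs
    have := (Subalgebra.mem_comap _ _ _).1 (hle hs)
    obtain ⟨u, hu⟩ := this
    refine ⟨u, ?_⟩
    have h2 : (Algebra.TensorProduct.map SA.val SA.val) u
        = TensorProduct.map SA.val.toLinearMap SA.val.toLinearMap u :=
      DFunLike.congr_fun (algTensorMap_toLinearMap (k := k) SA) u
    exact h2.symm.trans hu
  have hanti : ∀ s ∈ SA, antipode (R := k) s ∈ SA := by
    have hle : SA ≤ Subalgebra.comap (antipodeAlgHom (k := k) (A := A)) SA := by
      apply Algebra.adjoin_le
      intro w hw
      exact (Subalgebra.mem_comap _ _ _).2 (hWSA (hWS w hw))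
    intro s hs
    have := hle hs
    exact (Subalgebra.mem_comap _ _ _).1 this
  refine ⟨SA, ?_, ?_, ⟨hco, hanti⟩, Algebra.subset_adjoin hbW⟩
  · exact Algebra.adjoin_le fun x hx => hWB hx
  · refine Subalgebra.fg_def.2 ⟨(tW : Set A), tW.finite_toSet, ?_⟩
    rw [← Algebra.adjoin_span, htW]

end LocalFin



noncomputable section FormationAux
open Coalgebra HopfAlgebra TensorProduct

variable {k : Type} [Field k]
variable {A : Type} [CommRing A] [HopfAlgebra k A]

lemma comul_algebraMap (c : k) :
    Coalgebra.comul (R := k) (algebraMap k A c) = (algebraMap k A c) ⊗ₜ[k] (1 : A) := by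
  rw [Algebra.algebraMap_eq_smul_one, map_smul, Bialgebra.comul_one,
    Algebra.TensorProduct.one_def, TensorProduct.smul_tmul']

lemma bot_isHopfSub : IsHopfSubalgebra (k := k) (⊥ : Subalgebra k A) := by
  constructor
  · intro b hb
    obtain ⟨c, rfl⟩ := Algebra.mem_bot.1 hb
    refine ⟨(⟨algebraMap k A c, Algebra.mem_bot.2 ⟨c, rfl⟩⟩ : (⊥ : Subalgebra k A))
      ⊗ₜ[k] (1 : (⊥ : Subalgebra k A)), ?_⟩
    rw [comul_algebraMap]
    rfl
  · intro b hb
    obtain ⟨c, rfl⟩ := Algebra.mem_bot.1 hb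
    rw [antipode_algebraMap]
    exact hb

lemma range_val_le_of_le {S T : Subalgebra k A} (h : S ≤ T) :
    LinearMap.range S.val.toLinearMap ≤ LinearMap.range T.val.toLinearMap := by
  rintro _ ⟨x, rfl⟩
  exact ⟨⟨(x : A), h x.2⟩, rfl⟩

lemma sup_isHopfSub {S T : Subalgebra k A} (hS : IsHopfSubalgebra S) (hT : IsHopfSubalgebra T) :
    IsHopfSubalgebra (S ⊔ T) := by
  constructor
  · have key : ∀ U : Subalgebra k A, IsHopfSubalgebra U → U ≤ S ⊔ T →
        ∀ b ∈ U, Coalgebra.comul (R := k) b ∈ LinearMap.range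
          (TensorProduct.map (S ⊔ T).val.toLinearMap (S ⊔ T).val.toLinearMap) := by
      intro U hU hle b hb
      exact range_map_le_of_le (range_val_le_of_le hle) (range_val_le_of_le hle) (hU.1 b hb)
    have hP : S ⊔ T ≤ Subalgebra.comap (Bialgebra.comulAlgHom k A)
        ((Algebra.TensorProduct.map (S ⊔ T).val (S ⊔ T).val).range) := by
      have conv : ∀ (b : A), Coalgebra.comul (R := k) b ∈ LinearMap.range
          (TensorProduct.map (S ⊔ T).val.toLinearMap (S ⊔ T).val.toLinearMap) →
          b ∈ Subalgebra.comap (Bialgebra.comulAlgHom k A)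
            ((Algebra.TensorProduct.map (S ⊔ T).val (S ⊔ T).val).range) := by
        intro b hb
        obtain ⟨u, hu⟩ := hb
        refine (Subalgebra.mem_comap _ _ _).2 ⟨u, ?_⟩
        have h2 : (Algebra.TensorProduct.map (S ⊔ T).val (S ⊔ T).val) u
            = TensorProduct.map (S ⊔ T).val.toLinearMap (S ⊔ T).val.toLinearMap u :=
          DFunLike.congr_fun (algTensorMap_toLinearMap (k := k) (S ⊔ T)) u
        exact h2.trans hu
      refine sup_le ?_ ?_
      · intro b hb
        exact conv b (key S hS le_sup_left b hb)
      · intro b hb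
        exact conv b (key T hT le_sup_right b hb)
    intro b hb
    have := (Subalgebra.mem_comap _ _ _).1 (hP hb)
    obtain ⟨u, hu⟩ := this
    refine ⟨u, ?_⟩
    have h2 : (Algebra.TensorProduct.map (S ⊔ T).val (S ⊔ T).val) u
        = TensorProduct.map (S ⊔ T).val.toLinearMap (S ⊔ T).val.toLinearMap u :=
      DFunLike.congr_fun (algTensorMap_toLinearMap (k := k) (S ⊔ T)) u
    exact h2.symm.trans hu
  · have hP : S ⊔ T ≤ Subalgebra.comap (antipodeAlgHom (k := k) (A := A)) (S ⊔ T) := by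
      refine sup_le ?_ ?_
      · intro b hb
        exact (Subalgebra.mem_comap _ _ _).2 ((le_sup_left : S ≤ S ⊔ T) (hS.2 b hb))
      · intro b hb
        exact (Subalgebra.mem_comap _ _ _).2 ((le_sup_right : T ≤ S ⊔ T) (hT.2 b hb))
    intro b hb
    exact (Subalgebra.mem_comap _ _ _).1 (hP hb)

lemma fg_sup {S T : Subalgebra k A} (hS : S.FG) (hT : T.FG) : (S ⊔ T).FG := by
  classical
  obtain ⟨s, hs⟩ := hS
  obtain ⟨t, ht⟩ := hT
  exact ⟨s ∪ t, by rw [Finset.coe_union, Algebra.adjoin_union, hs, ht]⟩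

lemma hopf_zero_ne_one {k₀ : Type} [Field k₀] {A₀ : Type} [CommRing A₀]
    [HopfAlgebra k₀ A₀] : (0 : A₀) ≠ 1 := by
  intro h
  have h1 : Coalgebra.counit (R := k₀) (1 : A₀) = 1 := Bialgebra.counit_one
  rw [← h, map_zero] at h1
  exact zero_ne_one h1

lemma memFormation_bot {𝒞 : Set (HopfAlg k)} (h𝒞 : IsFormation 𝒞) :
    MemFormation 𝒞 (⊥ : Subalgebra k A) := by
  obtain ⟨B₀, hB₀, hns⟩ := h𝒞.nontrivial
  haveI : Nontrivial B₀.carrier := by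
    by_contra h
    rw [not_nontrivial_iff_subsingleton] at h
    exact hns fun x => ⟨0, Subsingleton.elim _ _⟩
  have hbot : IsHopfSubalgebra (k := k) (⊥ : Subalgebra k B₀.carrier) := bot_isHopfSub
  obtain ⟨D, hD, g, hghom, hginj, hgr⟩ := h𝒞.sub_closed B₀ hB₀ ⊥ hbot
  haveI : Nontrivial D.carrier :=
    ⟨0, 1, fun h => zero_ne_one (α := B₀.carrier) (by rw [← map_zero g, h, map_one])⟩
  have hsurj : Function.Surjective (algebraMap k D.carrier) := by
    intro d
    have : g d ∈ (⊥ : Subalgebra k B₀.carrier) := hgr ▸ ⟨d, rfl⟩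
    obtain ⟨c, hc⟩ := Algebra.mem_bot.1 this
    refine ⟨c, hginj ?_⟩
    rw [AlgHom.commutes, hc]
  have hinj : Function.Injective (algebraMap k D.carrier) := RingHom.injective _
  set e : k ≃ₐ[k] D.carrier := AlgEquiv.ofBijective (Algebra.ofId k D.carrier) ⟨hinj, hsurj⟩
    with he
  haveI : Nontrivial A := ⟨0, 1, hopf_zero_ne_one (k₀ := k)⟩
  set f : D.carrier →ₐ[k] A := (Algebra.ofId k A).comp e.symm.toAlgHom with hf
  have hfinj : Function.Injective f := by
    have h1 : Function.Injective (Algebra.ofId k A) := RingHom.injective _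
    exact h1.comp e.symm.injective
  refine ⟨D, hD, f, ?_, hfinj, ?_⟩
  · intro d
    obtain ⟨c, rfl⟩ := hsurj d
    rw [AlgHom.commutes, comul_algebraMap, comul_algebraMap, TensorProduct.map_tmul]
    rw [AlgHom.toLinearMap_apply, AlgHom.toLinearMap_apply, AlgHom.commutes, map_one]
  · ext x
    simp only [AlgHom.mem_range, Algebra.mem_bot, Set.mem_range]
    constructor
    · rintro ⟨d, rfl⟩
      exact ⟨e.symm d, rfl⟩
    · rintro ⟨c, rfl⟩
      exact ⟨e c, by simp [hf, Algebra.ofId_apply]⟩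

lemma memFormation_of_le {𝒞 : Set (HopfAlg k)} (h𝒞 : IsFormation 𝒞)
    {T S : Subalgebra k A} (hT : MemFormation 𝒞 T) (hS : IsHopfSubalgebra S)
    (hST : S ≤ T) : MemFormation 𝒞 S := by
  obtain ⟨D, hD, f, hfhom, hfinj, hfr⟩ := hT
  set S' : Subalgebra k D.carrier := S.comap f with hS'
  have hs'anti : ∀ d ∈ S', antipode (R := k) d ∈ S' := by
    intro d hd
    show f (antipode (R := k) d) ∈ S
    rw [← antipode_hopfHom hfhom hfinj]
    exact hS.2 _ hd
  have hs'co : ∀ d ∈ S', Coalgebra.comul (R := k) d ∈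
      LinearMap.range (TensorProduct.map S'.val.toLinearMap S'.val.toLinearMap) := by
    intro d hd
    have h1 : Coalgebra.comul (R := k) (f d) ∈
        LinearMap.range (TensorProduct.map S.val.toLinearMap S.val.toLinearMap) := hS.1 _ hd
    have hrange : LinearMap.range S.val.toLinearMap
        = LinearMap.range (f.toLinearMap ∘ₗ S'.val.toLinearMap) := by
      apply le_antisymm
      · rintro _ ⟨x, rfl⟩
        have hx : (x : A) ∈ f.range := hfr ▸ hST x.2
        obtain ⟨dx, hdx⟩ := hx
        have hdx' : f dx = (x : A) := hdx
        exact ⟨⟨dx, show f dx ∈ S from hdx' ▸ x.2⟩, hdx'⟩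
      · rintro _ ⟨y, rfl⟩
        exact ⟨⟨f (y : D.carrier), y.2⟩, rfl⟩
    have h2 : Coalgebra.comul (R := k) (f d) ∈ LinearMap.range
        (TensorProduct.map (f.toLinearMap ∘ₗ S'.val.toLinearMap)
          (f.toLinearMap ∘ₗ S'.val.toLinearMap)) :=
      range_map_le_of_le (le_of_eq hrange) (le_of_eq hrange) h1
    obtain ⟨u, hu⟩ := h2
    rw [TensorProduct.map_comp] at hu
    have h3 : TensorProduct.map f.toLinearMap f.toLinearMap
        (TensorProduct.map S'.val.toLinearMap S'.val.toLinearMap u)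
        = TensorProduct.map f.toLinearMap f.toLinearMap (Coalgebra.comul (R := k) d) := by
      rw [← hfhom d]
      exact hu
    exact ⟨u, map_tensor_injective f.toLinearMap f.toLinearMap hfinj hfinj h3⟩
  obtain ⟨E, hE, g, hghom, hginj, hgr⟩ := h𝒞.sub_closed D hD S' ⟨hs'co, hs'anti⟩
  refine ⟨E, hE, f.comp g, ?_, hfinj.comp hginj, ?_⟩
  · intro a
    rw [AlgHom.comp_apply, hfhom, hghom, AlgHom.comp_toLinearMap, ← LinearMap.comp_apply,
      ← TensorProduct.map_comp]
  · rw [AlgHom.range_comp, hgr, hS', Subalgebra.map_comap_eq_self (hfr ▸ hST)]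

/-- Helper: a finite set covered by members of a sup-closed family is covered by one member. -/
lemma finset_exists_sup {𝒮 : Set (Subalgebra k A)} (hbot : ⊥ ∈ 𝒮)
    (hsup : ∀ S ∈ 𝒮, ∀ T ∈ 𝒮, S ⊔ T ∈ 𝒮) (t : Finset A)
    (h : ∀ x ∈ t, ∃ T ∈ 𝒮, x ∈ T) : ∃ T ∈ 𝒮, ∀ x ∈ t, x ∈ T := by
  classical
  induction t using Finset.induction with
  | empty => exact ⟨⊥, hbot, by simp⟩
  | @insert a t ha ih =>
      obtain ⟨T, hT, hTt⟩ := ih fun x hx => h x (Finset.mem_insert_of_mem hx)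
      obtain ⟨T', hT', haT'⟩ := h a (Finset.mem_insert_self a t)
      refine ⟨T' ⊔ T, hsup T' hT' T hT, ?_⟩
      intro x hx
      rcases Finset.mem_insert.1 hx with rfl | hx
      · exact (le_sup_left : T' ≤ T' ⊔ T) haT'
      · exact (le_sup_right : T ≤ T' ⊔ T) (hTt x hx)

end FormationAux

theorem stmt2 (k : Type) [Field k] (𝒞 : Set (HopfAlg k)) (h𝒞 : IsFormation 𝒞)
    (A : Type) [CommRing A] [HopfAlgebra k A] :
    ∃ AC : Subalgebra k A,
      (AC : Set A) = {a : A | ∃ S : Subalgebra k A,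
          S.FG ∧ IsHopfSubalgebra S ∧ MemFormation 𝒞 S ∧ a ∈ S} ∧
      IsHopfSubalgebra AC ∧
      (∀ S : Subalgebra k A, S ≤ AC → S.FG → IsHopfSubalgebra S → MemFormation 𝒞 S) ∧
      (∀ B : Subalgebra k A, IsHopfSubalgebra B →
        (∀ S : Subalgebra k A, S ≤ B → S.FG → IsHopfSubalgebra S → MemFormation 𝒞 S) →
        B ≤ AC) := by
  classical
  set 𝒮 : Set (Subalgebra k A) := {S | S.FG ∧ IsHopfSubalgebra S ∧ MemFormation 𝒞 S} with h𝒮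
  have hbot : (⊥ : Subalgebra k A) ∈ 𝒮 :=
    ⟨Subalgebra.fg_bot, bot_isHopfSub, memFormation_bot h𝒞⟩
  have hsup : ∀ S ∈ 𝒮, ∀ T ∈ 𝒮, S ⊔ T ∈ 𝒮 := by
    intro S hS T hT
    refine ⟨fg_sup hS.1 hT.1, sup_isHopfSub hS.2.1 hT.2.1, ?_⟩
    exact h𝒞.sup_closed ⟨A⟩ S T hS.2.1 hT.2.1 hS.2.2 hT.2.2
  haveI : Nonempty 𝒮 := ⟨⟨⊥, hbot⟩⟩
  set AC : Subalgebra k A := ⨆ S : 𝒮, (S : Subalgebra k A) with hAC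
  have hdir : Directed (· ≤ ·) (fun S : 𝒮 => (S : Subalgebra k A)) := by
    rintro ⟨S, hS⟩ ⟨T, hT⟩
    exact ⟨⟨S ⊔ T, hsup S hS T hT⟩, le_sup_left, le_sup_right⟩
  have hcoe : (AC : Set A) = ⋃ S : 𝒮, ((S : Subalgebra k A) : Set A) :=
    Subalgebra.coe_iSup_of_directed hdir
  have hmem : ∀ a : A, a ∈ AC ↔ ∃ S ∈ 𝒮, a ∈ S := by
    intro a
    have : a ∈ (AC : Set A) ↔ a ∈ ⋃ S : 𝒮, ((S : Subalgebra k A) : Set A) := by rw [hcoe]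
    rw [SetLike.mem_coe] at this
    rw [this, Set.mem_iUnion]
    constructor
    · rintro ⟨⟨S, hS⟩, ha⟩
      exact ⟨S, hS, ha⟩
    · rintro ⟨S, hS, ha⟩
      exact ⟨⟨S, hS⟩, ha⟩
  have hle𝒮 : ∀ S ∈ 𝒮, S ≤ AC := by
    intro S hS
    exact le_iSup (fun S : 𝒮 => (S : Subalgebra k A)) ⟨S, hS⟩
  refine ⟨AC, ?_, ?_, ?_, ?_⟩
  · ext a
    rw [SetLike.mem_coe, hmem a]
    constructor
    · rintro ⟨S, ⟨h1, h2, h3⟩, ha⟩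
      exact ⟨S, h1, h2, h3, ha⟩
    · rintro ⟨S, h1, h2, h3, ha⟩
      exact ⟨S, ⟨h1, h2, h3⟩, ha⟩
  · constructor
    · intro a ha
      obtain ⟨S, hS, haS⟩ := (hmem a).1 ha
      exact range_map_le_of_le (range_val_le_of_le (hle𝒮 S hS))
        (range_val_le_of_le (hle𝒮 S hS)) (hS.2.1.1 a haS)
    · intro a ha
      obtain ⟨S, hS, haS⟩ := (hmem a).1 ha
      exact (hle𝒮 S hS) (hS.2.1.2 a haS)
  · intro S hSAC hSfg hShopf
    obtain ⟨t, ht⟩ := hSfg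
    have hcov : ∀ x ∈ t, ∃ T ∈ 𝒮, x ∈ T := by
      intro x hx
      have hxS : x ∈ S := ht ▸ Algebra.subset_adjoin hx
      exact (hmem x).1 (hSAC hxS)
    obtain ⟨T, hT𝒮, hTt⟩ := finset_exists_sup hbot hsup t hcov
    have hST : S ≤ T := by
      rw [← ht]
      exact Algebra.adjoin_le fun x hx => hTt x hx
    exact memFormation_of_le h𝒞 hT𝒮.2.2 hShopf hST
  · intro B hBhopf hBpro a ha
    obtain ⟨S, hSB, hSfg, hShopf, haS⟩ := exists_fg_hopf_between B hBhopf ha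
    have hmemS : MemFormation 𝒞 S := hBpro S hSB hSfg hShopf
    exact (hmem a).2 ⟨S, ⟨hSfg, hShopf, hmemS⟩, haS⟩
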